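/- Let n ≥ 1 and let F be a finite subset of the cone {λ ∈ ℝ^n : λ_1 ≥ … ≥ λ_n ≥ 0}, and let Φ be the convex hull of F. Then the set Δ = {(λ, x) ∈ ℝ^n × ℝ^{n²} : λ ∈ Φ and x ∈ Δ_λ}, fibred over Φ with the symplectic Gelfand–Cetlin polytopes as fibres, is a convex polytope; i.e., there exists a finite set S ⊆ ℝ^n × ℝ^{n²} such that Δ equals the convex hull of S. -/

import Mathlib

open Pointwise

/-- Index set for the odd rows `V_1, V_3, …, V_{2n-1}` of symplectic Gelfand–Cetlin
patterns: row `k` (0-indexed, `k = 0, …, n-1`) has `n - k` entries. -/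
abbrev SPOddIdx (n : ℕ) := {p : ℕ × ℕ // p.2 < n - p.1}
/-- Index set for the even rows `V_2, V_4, …, V_{2n-2}` of symplectic Gelfand–Cetlin
patterns: row `k` (0-indexed, `k = 0, …, n-2`) has `n - 1 - k` entries. -/
abbrev SPEvenIdx (n : ℕ) := {p : ℕ × ℕ // p.2 < n - 1 - p.1}
/-- The ambient space `ℝ^{n²}` of symplectic Gelfand–Cetlin patterns
(`n(n+1)/2` odd-row entries plus `n(n-1)/2` even-row entries). -/
abbrev SPPattern (n : ℕ) := (SPOddIdx n → ℝ) × (SPEvenIdx n → ℝ)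

/-- The symplectic Gelfand–Cetlin polytope `Δ_λ ⊆ ℝ^{n²}` of `SP(2n)`:
`V_1` interlaces `(λ_1, …, λ_n, 0)`, each `V_{2k}` interlaces `V_{2k-1}`, and each
`V_{2k+1}` interlaces `V_{2k}` with a `0` appended. -/
def gcSP (n : ℕ) (lam : Fin n → ℝ) : Set (SPPattern n) :=
  {x |
    (∀ (i : ℕ) (hi : i < n),
      lam ⟨i, hi⟩ ≥ x.1 ⟨(0, i), by omega⟩ ∧
      x.1 ⟨(0, i), by omega⟩ ≥ (if h : i + 1 < n then lam ⟨i + 1, h⟩ else 0)) ∧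
    (∀ (k i : ℕ) (hi : i < n - 1 - k),
      x.1 ⟨(k, i), by omega⟩ ≥ x.2 ⟨(k, i), hi⟩ ∧
      x.2 ⟨(k, i), hi⟩ ≥ x.1 ⟨(k, i + 1), by omega⟩) ∧
    (∀ (k i : ℕ) (hi : i < n - (k + 1)),
      x.2 ⟨(k, i), by omega⟩ ≥ x.1 ⟨(k + 1, i), by omega⟩ ∧
      x.1 ⟨(k + 1, i), by omega⟩ ≥
        (if h : i + 1 < n - 1 - k then x.2 ⟨(k, i + 1), h⟩ else 0))}

open Set

section Cut
variable {E : Type*} [AddCommGroup E] [Module ℝ E]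

/-- The point where the segment `[a, b]` crosses the hyperplane `f = c`. -/
noncomputable def crossPt (f : E →ₗ[ℝ] ℝ) (c : ℝ) (a b : E) : E :=
  if f a = f b then a
  else ((f b - c) / (f b - f a)) • a + ((c - f a) / (f b - f a)) • b

lemma crossPt_eq (f : E →ₗ[ℝ] ℝ) (c : ℝ) {a b : E} (hab : f a < f b) :
    crossPt f c a b = ((f b - c) / (f b - f a)) • a
      + (1 - (f b - c) / (f b - f a)) • b := by
  have h : f b - f a ≠ 0 := by linarith
  have h2 : (c - f a) / (f b - f a) = 1 - (f b - c) / (f b - f a) := by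
    field_simp
    ring
  rw [crossPt, if_neg hab.ne, h2]

lemma f_crossPt (f : E →ₗ[ℝ] ℝ) (c : ℝ) {a b : E} (hab : f a ≠ f b) :
    f (crossPt f c a b) = c := by
  rw [crossPt, if_neg hab]
  have h : f b - f a ≠ 0 := by intro h; apply hab; linarith
  rw [map_add, map_smul, map_smul, smul_eq_mul, smul_eq_mul]
  field_simp
  ring

/-- The candidate vertex set for `conv S ∩ {f ≤ c}`. -/
def cutSet (S : Set E) (f : E →ₗ[ℝ] ℝ) (c : ℝ) : Set E :=
  {x | x ∈ S ∧ f x ≤ c} ∪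
    (fun q : E × E => crossPt f c q.1 q.2) ''
      {q | q.1 ∈ S ∧ q.2 ∈ S ∧ f q.1 ≤ c ∧ c ≤ f q.2}

lemma cutSet_finite {S : Set E} (hS : S.Finite) (f : E →ₗ[ℝ] ℝ) (c : ℝ) :
    (cutSet S f c).Finite := by
  apply Set.Finite.union
  · exact hS.subset (fun x hx => hx.1)
  · exact ((hS.prod hS).subset (fun q hq => ⟨hq.1, hq.2.1⟩)).image _

lemma cutSet_mono {S S' : Set E} (h : S ⊆ S') (f : E →ₗ[ℝ] ℝ) (c : ℝ) :
    cutSet S f c ⊆ cutSet S' f c := by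
  apply Set.union_subset_union
  · exact fun x hx => ⟨h hx.1, hx.2⟩
  · exact Set.image_mono (fun q hq => ⟨h hq.1, h hq.2.1, hq.2.2⟩)

lemma cutSet_subset (S : Set E) (f : E →ₗ[ℝ] ℝ) (c : ℝ) :
    cutSet S f c ⊆ convexHull ℝ S ∩ {x | f x ≤ c} := by
  rintro x (⟨hxS, hxc⟩ | ⟨⟨a, b⟩, ⟨haS, hbS, hac, hcb⟩, rfl⟩)
  · exact ⟨subset_convexHull ℝ S hxS, hxc⟩
  · dsimp only at *
    rcases eq_or_lt_of_le (hac.trans hcb) with hab | hab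
    · have : crossPt f c a b = a := by rw [crossPt, if_pos hab]
      rw [this]
      refine ⟨subset_convexHull ℝ S haS, ?_⟩
      simp only [mem_setOf_eq]
      exact hac
    · constructor
      · rw [crossPt_eq f c hab]
        have hba : 0 < f b - f a := by linarith
        have h1 : (0:ℝ) ≤ (f b - c) / (f b - f a) := div_nonneg (by linarith) hba.le
        have h2 : (f b - c) / (f b - f a) ≤ 1 := by
          rw [div_le_one hba]; linarith
        apply segment_subset_convexHull haS hbS
        exact ⟨_, _, h1, by linarith, by ring, rfl⟩
      · simp only [mem_setOf_eq]
        rw [f_crossPt f c hab.ne]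

lemma cut_core (f : E →ₗ[ℝ] ℝ) (c : ℝ) :
    ∀ (m : ℕ) (S : Finset E) (p : E), S.card ≤ m → p ∈ convexHull ℝ (S : Set E) →
      f p ≤ c → p ∈ convexHull ℝ (cutSet ↑S f c) := by
  classical
  intro m
  induction m with
  | zero =>
    intro S p hcard hp _
    rw [Nat.le_zero, Finset.card_eq_zero] at hcard
    subst hcard
    simp at hp
  | succ m ih =>
    intro S p hcard hp hfp
    have hpc := hp
    rw [Finset.mem_convexHull'] at hp
    obtain ⟨w, hw0, hw1, hwp⟩ := hp
    by_cases hz : ∃ x ∈ S, w x = 0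
    · obtain ⟨x0, hx0S, hx0⟩ := hz
      have hp' : p ∈ convexHull ℝ ((S.erase x0 : Finset E) : Set E) := by
        rw [Finset.mem_convexHull']
        refine ⟨w, fun y hy => hw0 y (Finset.mem_of_mem_erase hy), ?_, ?_⟩
        · rw [Finset.sum_erase _ hx0]; exact hw1
        · rw [Finset.sum_erase]
          · exact hwp
          · rw [hx0, zero_smul]
      have hcard' : (S.erase x0).card ≤ m := by
        have := Finset.card_erase_of_mem hx0S
        omega
      exact convexHull_mono (cutSet_mono (by exact_mod_cast Finset.erase_subset x0 S) f c)
        (ih (S.erase x0) p hcard' hp' hfp)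
    · push_neg at hz
      by_cases hall : ∀ x ∈ S, f x ≤ c
      · exact convexHull_mono (fun x hx => Or.inl ⟨hx, hall x hx⟩) hpc
      · push_neg at hall
        obtain ⟨b, hbS, hbc⟩ := hall
        have hb' : c < f b := hbc
        have hwb : 0 < w b := (hw0 b hbS).lt_of_ne (Ne.symm (hz b hbS))
        have hfp' : f p = ∑ x ∈ S, w x * f x := by
          rw [← hwp, map_sum]; simp [map_smul]
        have hsum : ∑ x ∈ S, w x * (f x - c) ≤ 0 := by
          have heq : ∑ x ∈ S, w x * (f x - c) = f p - c := by
            simp only [mul_sub]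
            rw [Finset.sum_sub_distrib, ← Finset.sum_mul, hw1, one_mul, hfp']
          rw [heq]; linarith
        have hexlo : ∃ a ∈ S, f a < c := by
          by_contra hno
          push_neg at hno
          have hpos : 0 < ∑ x ∈ S, w x * (f x - c) := by
            apply Finset.sum_pos' (fun x hx => mul_nonneg (hw0 x hx) (by linarith [hno x hx]))
            exact ⟨b, hbS, mul_pos hwb (by linarith)⟩
          linarith
        obtain ⟨a, haS, hac⟩ := hexlo
        have hwa : 0 < w a := (hw0 a haS).lt_of_ne (Ne.symm (hz a haS))
        have hab : f a < f b := hac.trans hb'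
        have hne : a ≠ b := fun h => by rw [h] at hac; linarith
        set μ : ℝ := (f b - c) / (f b - f a) with hμdef
        have hba : (0:ℝ) < f b - f a := by linarith
        have hμ0 : 0 < μ := div_pos (by linarith) hba
        have hμ1 : μ < 1 := by rw [hμdef, div_lt_one hba]; linarith
        set s : ℝ := min (w a / μ) (w b / (1 - μ)) with hsdef
        have hs0 : 0 < s := lt_min (div_pos hwa hμ0) (div_pos hwb (by linarith))
        set w' : E → ℝ := fun x =>
          w x - (if x = a then s * μ else 0) - (if x = b then s * (1 - μ) else 0) with hw'def
        have hsa : s * μ ≤ w a := by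
          have h1 : s ≤ w a / μ := min_le_left _ _
          calc s * μ ≤ (w a / μ) * μ := by nlinarith
            _ = w a := by field_simp
        have hsb : s * (1 - μ) ≤ w b := by
          have h1 : s ≤ w b / (1 - μ) := min_le_right _ _
          calc s * (1 - μ) ≤ (w b / (1 - μ)) * (1 - μ) := by nlinarith
            _ = w b := div_mul_cancel₀ _ (ne_of_gt (by linarith))
        have hw'0 : ∀ x ∈ S, 0 ≤ w' x := by
          intro x hx
          simp only [hw'def]
          split_ifs with h1 h2 h2
          · exact absurd (h1 ▸ h2 : a = b) hne
          · subst h1; linarith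
          · subst h2; linarith
          · simpa using hw0 x hx
        have hw'ab : w' a = 0 ∨ w' b = 0 := by
          rcases min_choice (w a / μ) (w b / (1 - μ)) with h | h
          · left
            have hs' : s = w a / μ := by rw [hsdef, h]
            simp only [hw'def, if_pos rfl, if_neg hne, hs']
            rw [div_mul_cancel₀ _ (ne_of_gt hμ0)]
            simp
          · right
            have hs' : s = w b / (1 - μ) := by rw [hsdef, h]
            simp only [hw'def, if_neg (Ne.symm hne), if_pos rfl, hs']
            rw [div_mul_cancel₀ _ (ne_of_gt (by linarith : (0:ℝ) < 1 - μ))]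
            simp
        have hsum' : ∑ x ∈ S, w' x = 1 - s := by
          simp only [hw'def]
          rw [Finset.sum_sub_distrib, Finset.sum_sub_distrib,
            Finset.sum_ite_eq' S a (fun _ => s * μ),
            Finset.sum_ite_eq' S b (fun _ => s * (1 - μ)), if_pos haS, if_pos hbS, hw1]
          ring
        have hcross : crossPt f c a b = μ • a + (1 - μ) • b := crossPt_eq f c hab
        have hq0 : ∑ x ∈ S, w' x • x = p - s • crossPt f c a b := by
          simp only [hw'def, sub_smul, ite_smul, zero_smul]
          rw [Finset.sum_sub_distrib, Finset.sum_sub_distrib,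
            Finset.sum_ite_eq' S a (fun x => (s * μ) • x),
            Finset.sum_ite_eq' S b (fun x => (s * (1 - μ)) • x), if_pos haS, if_pos hbS,
            hwp, hcross]
          rw [smul_add, smul_smul, smul_smul]
          abel
        have hsle1 : s ≤ 1 := by
          have h0 : 0 ≤ ∑ x ∈ S, w' x := Finset.sum_nonneg hw'0
          linarith [hsum' ▸ h0]
        have hcrossmem : crossPt f c a b ∈ cutSet (↑S) f c :=
          Or.inr ⟨(a, b), ⟨haS, hbS, hac.le, hb'.le⟩, rfl⟩
        rcases eq_or_lt_of_le hsle1 with hs1 | hs1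
        · have hall0 : ∀ x ∈ S, w' x = 0 := by
            intro x hx
            have := (Finset.sum_eq_zero_iff_of_nonneg hw'0).mp (by rw [hsum']; linarith)
            exact this x hx
          have h0 : (0:E) = p - s • crossPt f c a b := by
            rw [← hq0]
            exact (Finset.sum_eq_zero (fun x hx => by rw [hall0 x hx, zero_smul])).symm
          have : p = crossPt f c a b := by
            have := h0.symm
            rw [sub_eq_zero] at this
            rw [this, hs1, one_smul]
          rw [this]
          exact subset_convexHull ℝ _ hcrossmem
        · obtain ⟨z, hzS, hz0⟩ : ∃ z ∈ S, w' z = 0 := by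
            rcases hw'ab with h | h
            · exact ⟨a, haS, h⟩
            · exact ⟨b, hbS, h⟩
          have h1s : (0:ℝ) < 1 - s := by linarith
          set q : E := (1 - s)⁻¹ • (p - s • crossPt f c a b) with hqdef
          have hq : q ∈ convexHull ℝ ((S.erase z : Finset E) : Set E) := by
            rw [Finset.mem_convexHull']
            refine ⟨fun x => (1 - s)⁻¹ * w' x, ?_, ?_, ?_⟩
            · exact fun y hy => mul_nonneg (by positivity)
                (hw'0 y (Finset.mem_of_mem_erase hy))
            · rw [← Finset.mul_sum, Finset.sum_erase _ hz0, hsum']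
              field_simp
            · have : ∑ y ∈ S.erase z, ((1 - s)⁻¹ * w' y) • y
                  = (1 - s)⁻¹ • ∑ y ∈ S.erase z, w' y • y := by
                rw [Finset.smul_sum]
                exact Finset.sum_congr rfl (fun y _ => by rw [smul_smul])
              rw [this, Finset.sum_erase _ (by rw [hz0, zero_smul]), hq0]
          have hfq : f q ≤ c := by
            rw [hqdef, map_smul, map_sub, map_smul, f_crossPt f c hab.ne, smul_eq_mul,
              smul_eq_mul]
            rw [inv_mul_le_iff₀ h1s]
            nlinarith
          have hcard' : (S.erase z).card ≤ m := by
            have := Finset.card_erase_of_mem hzS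
            omega
          have hqmem : q ∈ convexHull ℝ (cutSet (↑S) f c) :=
            convexHull_mono (cutSet_mono (by exact_mod_cast Finset.erase_subset z S) f c)
              (ih (S.erase z) q hcard' hq hfq)
          have hps : p = s • crossPt f c a b + (1 - s) • q := by
            rw [hqdef, smul_smul, mul_inv_cancel₀ (by linarith), one_smul]
            abel
          rw [hps]
          exact (convex_convexHull ℝ _) (subset_convexHull ℝ _ hcrossmem) hqmem hs0.le
            (by linarith) (by ring)

lemma cut_polytope {S : Set E} (hS : S.Finite) (f : E →ₗ[ℝ] ℝ) (c : ℝ) :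
    ∃ T : Set E, T.Finite ∧
      convexHull ℝ S ∩ {x | f x ≤ c} = convexHull ℝ T := by
  refine ⟨cutSet S f c, cutSet_finite hS f c, ?_⟩
  apply Set.Subset.antisymm
  · intro p hp
    have h1 : p ∈ convexHull ℝ ((hS.toFinset : Finset E) : Set E) := by
      rw [hS.coe_toFinset]; exact hp.1
    have := cut_core f c hS.toFinset.card hS.toFinset p le_rfl h1 hp.2
    rwa [hS.coe_toFinset] at this
  · exact Set.Subset.trans (convexHull_min (cutSet_subset S f c)
      ((convex_convexHull ℝ S).inter (convex_halfSpace_le (LinearMap.isLinear f) c)))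
      (Set.Subset.rfl)

lemma cuts_polytope {ι : Type*} (f : ι → (E →ₗ[ℝ] ℝ)) (c : ι → ℝ) (u : Finset ι) :
    ∀ S : Set E, S.Finite → ∃ T : Set E, T.Finite ∧
      convexHull ℝ S ∩ {x | ∀ i ∈ u, f i x ≤ c i} = convexHull ℝ T := by
  classical
  induction u using Finset.induction_on with
  | empty =>
    intro S hS
    refine ⟨S, hS, ?_⟩
    simp
  | @insert i u hiu ih =>
    intro S hS
    obtain ⟨T₁, hT₁fin, hT₁⟩ := cut_polytope hS (f i) (c i)
    obtain ⟨T₂, hT₂fin, hT₂⟩ := ih T₁ hT₁fin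
    refine ⟨T₂, hT₂fin, ?_⟩
    have hset : {x | ∀ j ∈ insert i u, f j x ≤ c j}
        = {x | f i x ≤ c i} ∩ {x | ∀ j ∈ u, f j x ≤ c j} := by
      ext x
      simp [forall_and]
    rw [hset, ← Set.inter_assoc, hT₁, hT₂]

end Cut

instance SPOddIdx.finite (n : ℕ) : Finite (SPOddIdx n) := by
  apply Finite.of_injective
    (fun p : SPOddIdx n => ((⟨p.1.1, by have := p.2; omega⟩ : Fin n),
      (⟨p.1.2, by have := p.2; omega⟩ : Fin n)))
  rintro ⟨⟨a, b⟩, ha⟩ ⟨⟨c, d⟩, hc⟩ h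
  simp only [Prod.mk.injEq, Fin.mk.injEq] at h
  simp [h.1, h.2]

instance SPEvenIdx.finite (n : ℕ) : Finite (SPEvenIdx n) := by
  apply Finite.of_injective
    (fun p : SPEvenIdx n => ((⟨p.1.1, by have := p.2; omega⟩ : Fin n),
      (⟨p.1.2, by have := p.2; omega⟩ : Fin n)))
  rintro ⟨⟨a, b⟩, ha⟩ ⟨⟨c, d⟩, hc⟩ h
  simp only [Prod.mk.injEq, Fin.mk.injEq] at h
  simp [h.1, h.2]

/-- The ambient space for the fibred polytope. -/
abbrev GCSpace (n : ℕ) := (Fin n → ℝ) × SPPattern n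

noncomputable def lamP (n : ℕ) (i : Fin n) : GCSpace n →ₗ[ℝ] ℝ :=
  (LinearMap.proj i).comp (LinearMap.fst ℝ _ _)

noncomputable def oddP (n : ℕ) (q : SPOddIdx n) : GCSpace n →ₗ[ℝ] ℝ :=
  (LinearMap.proj q).comp ((LinearMap.fst ℝ _ _).comp (LinearMap.snd ℝ _ _))

noncomputable def evenP (n : ℕ) (q : SPEvenIdx n) : GCSpace n →ₗ[ℝ] ℝ :=
  (LinearMap.proj q).comp ((LinearMap.snd ℝ _ _).comp (LinearMap.snd ℝ _ _))

@[simp] lemma lamP_apply (n : ℕ) (i : Fin n) (p : GCSpace n) : lamP n i p = p.1 i := rfl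
@[simp] lemma oddP_apply (n : ℕ) (q : SPOddIdx n) (p : GCSpace n) :
    oddP n q p = p.2.1 q := rfl
@[simp] lemma evenP_apply (n : ℕ) (q : SPEvenIdx n) (p : GCSpace n) :
    evenP n q p = p.2.2 q := rfl

/-- Index type for the linear constraints defining the fibred GC polytope. -/
abbrev ConIdx (n : ℕ) := (Fin n ⊕ Fin n) ⊕ (SPEvenIdx n ⊕ SPEvenIdx n) ⊕ (SPEvenIdx n ⊕ SPEvenIdx n)

noncomputable def gcCon (n : ℕ) : ConIdx n → (GCSpace n →ₗ[ℝ] ℝ)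
  | .inl (.inl i) => oddP n ⟨(0, i.1), by have := i.2; omega⟩ - lamP n i
  | .inl (.inr i) => (if h : i.1 + 1 < n then lamP n ⟨i.1 + 1, h⟩ else 0)
      - oddP n ⟨(0, i.1), by have := i.2; omega⟩
  | .inr (.inl (.inl q)) => evenP n q - oddP n ⟨(q.1.1, q.1.2), by have := q.2; omega⟩
  | .inr (.inl (.inr q)) => oddP n ⟨(q.1.1, q.1.2 + 1), by have := q.2; omega⟩ - evenP n q
  | .inr (.inr (.inl q)) => oddP n ⟨(q.1.1 + 1, q.1.2), by have := q.2; omega⟩ - evenP n q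
  | .inr (.inr (.inr q)) =>
      (if h : q.1.2 + 1 < n - 1 - q.1.1 then evenP n ⟨(q.1.1, q.1.2 + 1), h⟩ else 0)
        - oddP n ⟨(q.1.1 + 1, q.1.2), by have := q.2; omega⟩

lemma gcSP_iff_con (n : ℕ) (p : GCSpace n) :
    p.2 ∈ gcSP n p.1 ↔ ∀ i : ConIdx n, gcCon n i p ≤ 0 := by
  constructor
  · rintro ⟨h1, h2, h3⟩ i
    rcases i with (i | i) | ((q | q) | (q | q))
    · have := (h1 i.1 i.2).1
      simp only [gcCon, LinearMap.sub_apply, oddP_apply, lamP_apply, ge_iff_le] at this ⊢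
      have he : (⟨i.1, i.2⟩ : Fin n) = i := rfl
      rw [he] at this
      linarith
    · have := (h1 i.1 i.2).2
      simp only [ge_iff_le] at this
      simp only [gcCon, LinearMap.sub_apply, oddP_apply]
      by_cases h : i.1 + 1 < n
      · rw [dif_pos h] at this ⊢
        simp only [lamP_apply]
        linarith
      · rw [dif_neg h] at this ⊢
        simp only [LinearMap.zero_apply]
        linarith
    · have := (h2 q.1.1 q.1.2 q.2).1
      simp only [ge_iff_le] at this
      simp only [gcCon, LinearMap.sub_apply, evenP_apply, oddP_apply]
      linarith
    · have := (h2 q.1.1 q.1.2 q.2).2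
      simp only [ge_iff_le] at this
      simp only [gcCon, LinearMap.sub_apply, evenP_apply, oddP_apply]
      linarith
    · have := (h3 q.1.1 q.1.2 (by have := q.2; omega)).1
      simp only [ge_iff_le] at this
      simp only [gcCon, LinearMap.sub_apply, evenP_apply, oddP_apply]
      linarith
    · have := (h3 q.1.1 q.1.2 (by have := q.2; omega)).2
      simp only [ge_iff_le] at this
      simp only [gcCon, LinearMap.sub_apply, oddP_apply]
      by_cases h : q.1.2 + 1 < n - 1 - q.1.1
      · rw [dif_pos h] at this ⊢
        simp only [evenP_apply]
        linarith
      · rw [dif_neg h] at this ⊢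
        simp only [LinearMap.zero_apply]
        linarith
  · intro hc
    refine ⟨?_, ?_, ?_⟩
    · intro i hi
      constructor
      · have := hc (.inl (.inl ⟨i, hi⟩))
        simp only [gcCon, LinearMap.sub_apply, oddP_apply, lamP_apply, ge_iff_le] at this ⊢
        linarith
      · have := hc (.inl (.inr ⟨i, hi⟩))
        simp only [gcCon, LinearMap.sub_apply, oddP_apply, ge_iff_le] at this ⊢
        by_cases h : i + 1 < n
        · rw [dif_pos h] at this ⊢
          simp only [lamP_apply] at this
          linarith
        · rw [dif_neg h] at this ⊢
          simp only [LinearMap.zero_apply] at this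
          linarith
    · intro k i hi
      constructor
      · have := hc (.inr (.inl (.inl ⟨(k, i), hi⟩)))
        simp only [gcCon, LinearMap.sub_apply, evenP_apply, oddP_apply, ge_iff_le] at this ⊢
        linarith
      · have := hc (.inr (.inl (.inr ⟨(k, i), hi⟩)))
        simp only [gcCon, LinearMap.sub_apply, evenP_apply, oddP_apply, ge_iff_le] at this ⊢
        linarith
    · intro k i hi
      have hi' : i < n - 1 - k := by omega
      constructor
      · have := hc (.inr (.inr (.inl ⟨(k, i), hi'⟩)))
        simp only [gcCon, LinearMap.sub_apply, evenP_apply, oddP_apply, ge_iff_le] at this ⊢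
        linarith
      · have := hc (.inr (.inr (.inr ⟨(k, i), hi'⟩)))
        simp only [gcCon, LinearMap.sub_apply, oddP_apply, ge_iff_le] at this ⊢
        by_cases h : i + 1 < n - 1 - k
        · rw [dif_pos h] at this ⊢
          simp only [evenP_apply] at this
          linarith
        · rw [dif_neg h] at this ⊢
          simp only [LinearMap.zero_apply] at this
          linarith

lemma gcSP_bounds {n : ℕ} {lam : Fin n → ℝ} {M : ℝ} (h0 : ∀ i, 0 ≤ lam i)
    (hM : ∀ i, lam i ≤ M) (hM0 : 0 ≤ M) {x : SPPattern n} (hx : x ∈ gcSP n lam) :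
    (∀ q : SPOddIdx n, 0 ≤ x.1 q ∧ x.1 q ≤ M) ∧
    (∀ q : SPEvenIdx n, 0 ≤ x.2 q ∧ x.2 q ≤ M) := by
  obtain ⟨h1, h2, h3⟩ := hx
  -- upper bound for odd rows, by induction on the row index k
  have hupper : ∀ k i (h : i < n - k), x.1 ⟨(k, i), h⟩ ≤ M := by
    intro k
    induction k with
    | zero =>
      intro i h
      have := (h1 i (by omega)).1
      simp only [ge_iff_le] at this
      calc x.1 ⟨(0, i), h⟩ ≤ lam ⟨i, by omega⟩ := this
        _ ≤ M := hM _
    | succ k ih =>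
      intro i h
      have ha := (h3 k i (by omega)).1
      have hb := (h2 k i (by omega)).1
      simp only [ge_iff_le] at ha hb
      have := ih i (by omega)
      calc x.1 ⟨(k + 1, i), h⟩ ≤ x.2 ⟨(k, i), by omega⟩ := ha
        _ ≤ x.1 ⟨(k, i), by omega⟩ := hb
        _ ≤ M := this
  -- nonnegativity for odd rows: descending induction within each row
  have hlow : ∀ m k i (h : i < n - k), n - k - i ≤ m → 0 ≤ x.1 ⟨(k, i), h⟩ := by
    intro m
    induction m with
    | zero => intro k i h hm; omega
    | succ m ih =>
      intro k i h hm
      cases k with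
      | zero =>
        have := (h1 i (by omega)).2
        simp only [ge_iff_le] at this
        by_cases hc : i + 1 < n
        · rw [dif_pos hc] at this
          exact le_trans (h0 _) this
        · rw [dif_neg hc] at this
          exact this
      | succ k =>
        have hb := (h3 k i (by omega)).2
        simp only [ge_iff_le] at hb
        by_cases hc : i + 1 < n - 1 - k
        · rw [dif_pos hc] at hb
          have ha := (h3 k (i + 1) (by omega)).1
          simp only [ge_iff_le] at ha
          have := ih (k + 1) (i + 1) (by omega) (by omega)
          calc (0:ℝ) ≤ x.1 ⟨(k + 1, i + 1), by omega⟩ := this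
            _ ≤ x.2 ⟨(k, i + 1), hc⟩ := ha
            _ ≤ x.1 ⟨(k + 1, i), by omega⟩ := hb
        · rw [dif_neg hc] at hb
          exact hb
  constructor
  · rintro ⟨⟨k, i⟩, h⟩
    exact ⟨hlow (n - k - i) k i h le_rfl, hupper k i h⟩
  · rintro ⟨⟨k, i⟩, h⟩
    have ha := (h3 k i (by omega)).1
    have hb := (h2 k i h).1
    simp only [ge_iff_le] at ha hb
    constructor
    · exact le_trans (hlow (n - (k + 1) - i) (k + 1) i (by omega) le_rfl) ha
    · exact le_trans hb (hupper k i (by omega))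

/-- For `n ≥ 1`, a finite subset `F` of the cone
`{λ ∈ ℝⁿ : λ_1 ≥ … ≥ λ_n ≥ 0}` and `Φ = conv(F)`, the set
`Δ = {(λ, x) : λ ∈ Φ, x ∈ Δ_λ}` fibred over `Φ` with the symplectic Gelfand–Cetlin
polytopes as fibres is a convex polytope: it is the convex hull of a finite set. -/
theorem gcSP_fibred_polytope (n : ℕ) (hn : 1 ≤ n) (F : Set (Fin n → ℝ))
    (hF : F.Finite)
    (hFcone : ∀ lam ∈ F, (∀ i j : Fin n, i ≤ j → lam j ≤ lam i) ∧ (∀ i, 0 ≤ lam i)) :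
    ∃ S : Set ((Fin n → ℝ) × SPPattern n), S.Finite ∧
      {p : (Fin n → ℝ) × SPPattern n | p.1 ∈ convexHull ℝ F ∧ p.2 ∈ gcSP n p.1} =
        convexHull ℝ S := by
  classical
  obtain ⟨M₀, hM₀⟩ : ∃ M₀, ∀ y ∈ (fun q : (Fin n → ℝ) × Fin n => q.1 q.2) ''
      (F ×ˢ (univ : Set (Fin n))), y ≤ M₀ := by
    have hfin : ((fun q : (Fin n → ℝ) × Fin n => q.1 q.2) '' (F ×ˢ univ)).Finite :=
      (hF.prod finite_univ).image _
    obtain ⟨M₀, hM₀⟩ := hfin.bddAbove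
    exact ⟨M₀, fun y hy => hM₀ hy⟩
  set M := max M₀ 0 with hMdef
  have hM0 : (0:ℝ) ≤ M := le_max_right _ _
  have hFM : ∀ v ∈ F, ∀ i, v i ≤ M :=
    fun v hv i => le_trans (hM₀ _ ⟨(v, i), ⟨hv, mem_univ i⟩, rfl⟩) (le_max_left _ _)
  set K : Set (Fin n → ℝ) := {l | ∀ i, 0 ≤ l i ∧ l i ≤ M} with hK
  have hKconv : Convex ℝ K := by
    intro u hu v hv a b ha hb hab
    intro i
    have hui := hu i
    have hvi := hv i
    simp only [Pi.add_apply, Pi.smul_apply, smul_eq_mul]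
    constructor
    · nlinarith [hui.1, hvi.1]
    · nlinarith [hui.2, hvi.2]
  have hFK : convexHull ℝ F ⊆ K :=
    convexHull_min (fun v hv i => ⟨(hFcone v hv).2 i, hFM v hv i⟩) hKconv
  set Vodd : Set (SPOddIdx n → ℝ) := univ.pi (fun _ => ({0, M} : Set ℝ)) with hVodd
  set Veven : Set (SPEvenIdx n → ℝ) := univ.pi (fun _ => ({0, M} : Set ℝ)) with hVeven
  set S0 : Set (GCSpace n) := F ×ˢ (Vodd ×ˢ Veven) with hS0
  have hfin01 : ∀ (ι : Type) [Finite ι], (univ.pi (fun _ : ι => ({0, M} : Set ℝ))).Finite :=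
    fun ι _ => Set.Finite.pi (fun _ => (finite_singleton M).insert 0)
  have hS0fin : S0.Finite := hF.prod ((hfin01 _).prod (hfin01 _))
  have hIcc : convexHull ℝ ({0, M} : Set ℝ) = Icc 0 M := by
    rw [convexHull_pair, segment_eq_Icc hM0]
  have hconvS0 : convexHull ℝ S0 = (convexHull ℝ F) ×ˢ
      ((univ.pi fun _ : SPOddIdx n => Icc (0:ℝ) M) ×ˢ
        (univ.pi fun _ : SPEvenIdx n => Icc (0:ℝ) M)) := by
    rw [hS0, convexHull_prod, convexHull_prod, convexHull_pi, convexHull_pi]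
    simp only [hIcc]
  have hFintype : Fintype (ConIdx n) := Fintype.ofFinite _
  obtain ⟨T, hTfin, hT⟩ :=
    cuts_polytope (gcCon n) (fun _ => (0:ℝ)) Finset.univ S0 hS0fin
  refine ⟨T, hTfin, ?_⟩
  rw [← hT]
  ext p
  simp only [mem_inter_iff, mem_setOf_eq]
  constructor
  · rintro ⟨hp1, hp2⟩
    have hb := gcSP_bounds (fun i => (hFK hp1 i).1) (fun i => (hFK hp1 i).2) hM0 hp2
    refine ⟨?_, fun i _ => (gcSP_iff_con n p).mp hp2 i⟩
    rw [hconvS0]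
    exact ⟨hp1, fun q _ => ⟨(hb.1 q).1, (hb.1 q).2⟩, fun q _ => ⟨(hb.2 q).1, (hb.2 q).2⟩⟩
  · rintro ⟨hp0, hcon⟩
    rw [hconvS0] at hp0
    exact ⟨hp0.1, (gcSP_iff_con n p).mpr (fun i => hcon i (Finset.mem_univ i))⟩
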